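/- There exist ε > 0 and R₀ > 1/ε¹⁰ such that for all R > R₀: for every w ∈ K⁺ and every n ≥ 1, |xₙ| ≤ (3/2)·Mₙ₋₁, where Hⁿ(w) = (xₙ,yₙ,zₙ) and Mₙ = max{R, 2|azₙ|, |xₙ|^{3/2}, (1/ε)|yₙ|^{3/2}}. -/

import Mathlib

open Complex Filter Topology

/-- The quadratic automorphism `H(x,y,z) = (xy + az, x² + by, x)` of `ℂ³`. -/
noncomputable def H (a b : ℂ) (w : ℂ × ℂ × ℂ) : ℂ × ℂ × ℂ :=
  (w.1 * w.2.1 + a * w.2.2, w.1 ^ 2 + b * w.2.1, w.1)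

/-- `V⁻ = {(x,y,z) : |xy| > max{R, 2|az|, |x|^{3/2}, (1/ε)|y|^{3/2}}}`. -/
noncomputable def Vminus (a : ℂ) (ε R : ℝ) : Set (ℂ × ℂ × ℂ) :=
  {w | ‖w.1 * w.2.1‖ >
    max R (max (2 * ‖a * w.2.2‖)
      (max ((‖w.1‖) ^ ((3 : ℝ) / 2))
        ((1 / ε) * (‖w.2.1‖) ^ ((3 : ℝ) / 2))))}

/-- `U⁺ = ⋃_{n≥0} H⁻ⁿ(V⁻)`, i.e. the points whose forward orbit meets `V⁻`. -/
noncomputable def Uplus (a b : ℂ) (ε R : ℝ) : Set (ℂ × ℂ × ℂ) :=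
  ⋃ n : ℕ, (H a b)^[n] ⁻¹' Vminus a ε R

/-- `K⁺ = ℂ³ \ U⁺`. -/
noncomputable def Kplus (a b : ℂ) (ε R : ℝ) : Set (ℂ × ℂ × ℂ) :=
  (Uplus a b ε R)ᶜ

/-- `Mₙ = max{R, 2|azₙ|, |xₙ|^{3/2}, (1/ε)|yₙ|^{3/2}}` where `Hⁿ(w) = (xₙ,yₙ,zₙ)`. -/
noncomputable def Mseq (a b : ℂ) (ε R : ℝ) (w : ℂ × ℂ × ℂ) (n : ℕ) : ℝ :=
  max R (max (2 * ‖a * ((H a b)^[n] w).2.2‖)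
    (max (‖((H a b)^[n] w).1‖ ^ ((3 : ℝ) / 2))
      ((1 / ε) * ‖((H a b)^[n] w).2.1‖ ^ ((3 : ℝ) / 2))))

/-- there exist `ε > 0` and `R₀ > 1/ε¹⁰` such that for all
`R > R₀`: for every `w ∈ K⁺` and every `n ≥ 1`, `|xₙ| ≤ (3/2)·Mₙ₋₁`. -/
theorem stmt10 (a b : ℂ) (ha : a ≠ 0) (hb : b ≠ 0) :
    ∃ ε > (0 : ℝ), ∃ R₀ > 1 / ε ^ 10, ∀ R > R₀, ∀ w ∈ Kplus a b ε R,
      ∀ n : ℕ, ‖((H a b)^[n + 1] w).1‖ ≤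
        3 / 2 * Mseq a b ε R w n := by
  refine ⟨1, one_pos, 2, by norm_num, fun R hR w hw n => ?_⟩
  have hK : (H a b)^[n] w ∉ Vminus a 1 R := fun h =>
    hw (Set.mem_iUnion.2 ⟨n, h⟩)
  set p := (H a b)^[n] w with hp
  have hle : ‖p.1 * p.2.1‖ ≤ Mseq a b 1 R w n := not_lt.1 hK
  have haz : 2 * ‖a * p.2.2‖ ≤ Mseq a b 1 R w n :=
    le_trans (le_max_left _ _) (le_max_right _ _)
  rw [Function.iterate_succ_apply']
  show ‖p.1 * p.2.1 + a * p.2.2‖ ≤ _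
  calc ‖p.1 * p.2.1 + a * p.2.2‖
      ≤ ‖p.1 * p.2.1‖ + ‖a * p.2.2‖ := norm_add_le _ _
    _ ≤ Mseq a b 1 R w n + Mseq a b 1 R w n / 2 := by linarith
    _ = 3 / 2 * Mseq a b 1 R w n := by ring
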